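/- The function h_τ(θ) := (1 − cos θ)/(sin θ)^{1+τ}, defined for θ ∈ (0, π/2), is non-decreasing on (0, π/2) when τ ∈ [0,1]; moreover lim_{θ→π/2} h_τ(θ) = 1, and lim_{θ→0⁺} h_τ(θ) equals 0 if τ ∈ [0,1) and 1/2 if τ = 1. -/

import Mathlib

open Real Filter Topology

/-- Half-angle rewriting of `h_τ`. -/
lemma h_tau_half_angle (τ θ : ℝ) (h1 : 0 < θ) (h2 : θ < π / 2) :
    (1 - Real.cos θ) / Real.sin θ ^ (1 + τ) =
      (2 : ℝ) ^ (-τ) * Real.sin (θ / 2) ^ (1 - τ) / Real.cos (θ / 2) ^ (1 + τ) := by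
  have hπ := Real.pi_pos
  have hs : 0 < Real.sin (θ / 2) := Real.sin_pos_of_pos_of_lt_pi (by linarith) (by linarith)
  have hc : 0 < Real.cos (θ / 2) := Real.cos_pos_of_mem_Ioo ⟨by linarith, by linarith⟩
  have hsin : Real.sin θ = 2 * (Real.sin (θ / 2) * Real.cos (θ / 2)) := by
    have := Real.sin_two_mul (θ / 2)
    rw [show 2 * (θ / 2) = θ by ring] at this
    rw [this]; ring
  have hcos : 1 - Real.cos θ = 2 * Real.sin (θ / 2) ^ 2 := by
    have h := Real.cos_sq (θ / 2)
    rw [show 2 * (θ / 2) = θ by ring] at h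
    have h2 := Real.sin_sq_add_cos_sq (θ / 2)
    nlinarith [h, h2]
  rw [hcos, hsin, Real.mul_rpow (by norm_num) (mul_nonneg hs.le hc.le),
    Real.mul_rpow hs.le hc.le]
  have e1 : (2 : ℝ) ^ (-τ) = 2 / (2 : ℝ) ^ (1 + τ) := by
    rw [show -τ = 1 - (1 + τ) by ring, Real.rpow_sub (by norm_num), Real.rpow_one]
  have e2 : Real.sin (θ / 2) ^ (1 - τ) =
      Real.sin (θ / 2) ^ 2 / Real.sin (θ / 2) ^ (1 + τ) := by
    rw [show (Real.sin (θ / 2) : ℝ) ^ 2 = Real.sin (θ / 2) ^ (2 : ℝ) by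
        rw [← Real.rpow_natCast (Real.sin (θ / 2)) 2]; norm_num,
      ← Real.rpow_sub hs]
    congr 1
    ring
  rw [e1, e2]
  have h2p : (0 : ℝ) < (2 : ℝ) ^ (1 + τ) := Real.rpow_pos_of_pos (by norm_num) _
  have hsp : (0 : ℝ) < Real.sin (θ / 2) ^ (1 + τ) := Real.rpow_pos_of_pos hs _
  have hcp : (0 : ℝ) < Real.cos (θ / 2) ^ (1 + τ) := Real.rpow_pos_of_pos hc _
  field_simp

/-- The limit of `(1 - cos θ)/(sin θ)^2` as `θ → 0⁺` is `1/2`. -/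
lemma lim_half : Tendsto (fun θ : ℝ => (1 - Real.cos θ) / Real.sin θ ^ 2)
    (nhdsWithin 0 (Set.Ioi 0)) (nhds (1 / 2)) := by
  have hπ := Real.pi_pos
  have heq : ∀ θ ∈ Set.Ioo (0 : ℝ) π,
      (1 - Real.cos θ) / Real.sin θ ^ 2 = 1 / (1 + Real.cos θ) := by
    intro θ hθ
    have hπ := Real.pi_pos
    have hch : 0 < Real.cos (θ / 2) :=
      Real.cos_pos_of_mem_Ioo ⟨by linarith [hθ.1], by linarith [hθ.2]⟩
    have hsh : 0 < Real.sin (θ / 2) :=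
      Real.sin_pos_of_pos_of_lt_pi (by linarith [hθ.1]) (by linarith [hθ.2])
    have hcsq := Real.cos_sq (θ / 2)
    rw [show 2 * (θ / 2) = θ by ring] at hcsq
    have hc2 : -1 < Real.cos θ := by nlinarith
    have hc1 : Real.cos θ < 1 := by nlinarith [Real.sin_sq_add_cos_sq (θ / 2)]
    have hsin : Real.sin θ ^ 2 = (1 - Real.cos θ) * (1 + Real.cos θ) := by
      have := Real.sin_sq_add_cos_sq θ
      nlinarith
    rw [hsin]
    have hne1 : (1 : ℝ) - Real.cos θ ≠ 0 := by linarith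
    have hne2 : (1 : ℝ) + Real.cos θ ≠ 0 := by linarith
    field_simp
  have hmem : Set.Ioo (0 : ℝ) π ∈ nhdsWithin (0 : ℝ) (Set.Ioi 0) :=
    Ioo_mem_nhdsGT_of_mem ⟨le_refl _, hπ⟩
  have hcont : Tendsto (fun θ : ℝ => 1 / (1 + Real.cos θ)) (nhdsWithin 0 (Set.Ioi 0))
      (nhds (1 / 2)) := by
    have : ContinuousAt (fun θ : ℝ => 1 / (1 + Real.cos θ)) 0 := by
      apply ContinuousAt.div continuousAt_const
      · exact continuousAt_const.add Real.continuous_cos.continuousAt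
      · simp
    have h := this.tendsto.mono_left
      (nhdsWithin_le_nhds : nhdsWithin (0 : ℝ) (Set.Ioi 0) ≤ nhds 0)
    norm_num at h
    convert h using 2
    norm_num
  apply hcont.congr'
  filter_upwards [hmem] with θ hθ
  exact (heq θ hθ).symm

theorem h_tau_properties (τ : ℝ) (hτ : 0 ≤ τ) :
    (τ ≤ 1 → ∀ θ₁ θ₂ : ℝ, 0 < θ₁ → θ₁ ≤ θ₂ → θ₂ < π / 2 →
      (1 - Real.cos θ₁) / Real.sin θ₁ ^ (1 + τ) ≤
        (1 - Real.cos θ₂) / Real.sin θ₂ ^ (1 + τ)) ∧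
    Tendsto (fun θ : ℝ => (1 - Real.cos θ) / Real.sin θ ^ (1 + τ))
      (nhdsWithin (π / 2) (Set.Ioo 0 (π / 2))) (nhds 1) ∧
    (τ < 1 → Tendsto (fun θ : ℝ => (1 - Real.cos θ) / Real.sin θ ^ (1 + τ))
      (nhdsWithin 0 (Set.Ioi 0)) (nhds 0)) ∧
    (τ = 1 → Tendsto (fun θ : ℝ => (1 - Real.cos θ) / Real.sin θ ^ (1 + τ))
      (nhdsWithin 0 (Set.Ioi 0)) (nhds (1 / 2))) := by
  have hπ := Real.pi_pos
  refine ⟨?_, ?_, ?_, ?_⟩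
  · -- monotonicity
    intro hτ1 θ₁ θ₂ h1 h12 h2
    rw [h_tau_half_angle τ θ₁ h1 (lt_of_le_of_lt h12 h2),
      h_tau_half_angle τ θ₂ (lt_of_lt_of_le h1 h12) h2]
    have hs1 : 0 < Real.sin (θ₁ / 2) := Real.sin_pos_of_pos_of_lt_pi (by linarith) (by linarith)
    have hc2 : 0 < Real.cos (θ₂ / 2) := Real.cos_pos_of_mem_Ioo ⟨by linarith, by linarith⟩
    have hss : Real.sin (θ₁ / 2) ≤ Real.sin (θ₂ / 2) :=
      Real.sin_le_sin_of_le_of_le_pi_div_two (by linarith) (by linarith) (by linarith)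
    have hcc : Real.cos (θ₂ / 2) ≤ Real.cos (θ₁ / 2) :=
      Real.cos_le_cos_of_nonneg_of_le_pi (by linarith) (by linarith) (by linarith)
    have hs2 : 0 < Real.sin (θ₂ / 2) := Real.sin_pos_of_pos_of_lt_pi (by linarith) (by linarith)
    apply div_le_div₀ (mul_nonneg (Real.rpow_pos_of_pos (by norm_num) _).le
      (Real.rpow_nonneg hs2.le _)) _ (Real.rpow_pos_of_pos hc2 _)
      (Real.rpow_le_rpow hc2.le hcc (by linarith))
    exact mul_le_mul_of_nonneg_left (Real.rpow_le_rpow hs1.le hss (by linarith))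
      (by positivity)
  · -- limit at π/2
    have hcont : ContinuousAt (fun θ : ℝ => (1 - Real.cos θ) / Real.sin θ ^ (1 + τ)) (π / 2) := by
      apply ContinuousAt.div
      · exact continuousAt_const.sub Real.continuous_cos.continuousAt
      · exact (Real.continuousAt_rpow_const _ _ (Or.inl (by simp))).comp
          Real.continuous_sin.continuousAt
      · simp
    have h := hcont.tendsto.mono_left
      (nhdsWithin_le_nhds : nhdsWithin (π / 2) (Set.Ioo 0 (π / 2)) ≤ nhds (π / 2))
    simpa using h
  · -- limit 0 at 0⁺, τ < 1
    intro hτ1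
    have hmem : Set.Ioo (0 : ℝ) π ∈ nhdsWithin (0 : ℝ) (Set.Ioi 0) :=
      Ioo_mem_nhdsGT_of_mem ⟨le_refl _, hπ⟩
    have hpow : Tendsto (fun θ : ℝ => Real.sin θ ^ (1 - τ)) (nhdsWithin 0 (Set.Ioi 0))
        (nhds 0) := by
      have hca : ContinuousAt (fun x : ℝ => x ^ (1 - τ)) 0 :=
        Real.continuousAt_rpow_const 0 (1 - τ) (Or.inr (by linarith))
      have hsin0 : Tendsto Real.sin (nhdsWithin (0 : ℝ) (Set.Ioi 0)) (nhds 0) := by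
        have := Real.continuous_sin.continuousAt (x := 0)
        simpa using this.tendsto.mono_left nhdsWithin_le_nhds
      have := hca.tendsto.comp hsin0
      simpa [Function.comp_def, Real.zero_rpow (by linarith : (1 : ℝ) - τ ≠ 0)] using this
    have hprod := lim_half.mul hpow
    rw [mul_zero] at hprod
    apply hprod.congr'
    filter_upwards [hmem] with θ hθ
    have hs : 0 < Real.sin θ := Real.sin_pos_of_pos_of_lt_pi hθ.1 hθ.2
    have e : Real.sin θ ^ 2 = Real.sin θ ^ (1 + τ) * Real.sin θ ^ (1 - τ) := by
      rw [← Real.rpow_add hs, show 1 + τ + (1 - τ) = ((2 : ℕ) : ℝ) by push_cast; ring,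
        Real.rpow_natCast]
    have h1 : Real.sin θ ^ (1 + τ) ≠ 0 := (Real.rpow_pos_of_pos hs _).ne'
    have h2 : Real.sin θ ^ (1 - τ) ≠ 0 := (Real.rpow_pos_of_pos hs _).ne'
    rw [e]
    field_simp
  · -- limit 1/2 at 0⁺, τ = 1
    intro hτ1
    subst hτ1
    have hmem : Set.Ioo (0 : ℝ) π ∈ nhdsWithin (0 : ℝ) (Set.Ioi 0) :=
      Ioo_mem_nhdsGT_of_mem ⟨le_refl _, hπ⟩
    apply lim_half.congr'
    filter_upwards [hmem] with θ hθ
    rw [show (1 : ℝ) + 1 = ((2 : ℕ) : ℝ) by norm_num, Real.rpow_natCast]
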